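/- arXiv:1804.00296 — 3 statements merged into one kernel-verified Lean document; each statement's English description precedes it below -/
import Mathlib

section
/- Let p ∈ 𝔻, λ ∈ ℂ with |λ| = 1, and σ(z) = λ(p - z)/(1 - conj(p)·z), k_p(z) = sqrt(1 - |p|²)/(1 - conj(p)·z). If conj(k_p(conj(z))) · k_p(conj(σ(conj(z)))) = 1 for all z ∈ 𝔻, then λp = conj(p). -/
open Complex

theorem stmt1 (p lam : ℂ) (hp : ‖p‖ < 1) (hlam : ‖lam‖ = 1)
    (σ kp : ℂ → ℂ)
    (hσ : ∀ z : ℂ, σ z = lam * (p - z) / (1 - (starRingEnd ℂ) p * z))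
    (hk : ∀ z : ℂ, kp z = (Real.sqrt (1 - ‖p‖ ^ 2) : ℂ) / (1 - (starRingEnd ℂ) p * z))
    (h : ∀ z : ℂ, ‖z‖ < 1 →
      (starRingEnd ℂ) (kp ((starRingEnd ℂ) z)) * kp ((starRingEnd ℂ) (σ ((starRingEnd ℂ) z))) = 1) :
    lam * p = (starRingEnd ℂ) p := by
  have h0 := h 0 (by norm_num)
  simp only [map_zero, hσ, hk, mul_zero, sub_zero, div_one, map_mul, map_div₀, map_sub, map_one,
    Complex.conj_ofReal] at h0
  -- h0 : s * (s / (1 - conj p * (conj lam * conj p))) = 1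
  set s : ℝ := Real.sqrt (1 - ‖p‖ ^ 2) with hs
  have hD : (1 - (starRingEnd ℂ) p * ((starRingEnd ℂ) lam * (starRingEnd ℂ) p)) ≠ 0 := by
    intro hD
    rw [hD] at h0
    simp at h0
  have hsq : ((s : ℂ)) * s = ((1 - ‖p‖ ^ 2 : ℝ) : ℂ) := by
    rw [← Complex.ofReal_mul, Real.mul_self_sqrt]
    nlinarith [norm_nonneg p]
  have h1 : ((1 - ‖p‖ ^ 2 : ℝ) : ℂ) = 1 - (starRingEnd ℂ) p * ((starRingEnd ℂ) lam * (starRingEnd ℂ) p) := by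
    field_simp at h0
    rw [← hsq]
    have hD' : (1 - (starRingEnd ℂ) p ^ 2 * (starRingEnd ℂ) lam) ≠ 0 := by
      intro e; apply hD; linear_combination e
    rw [div_eq_one_iff_eq hD'] at h0
    linear_combination h0
  have hnp : ((‖p‖ : ℂ)) ^ 2 = p * (starRingEnd ℂ) p := by
    rw [Complex.mul_conj]
    norm_cast
    simp [Complex.normSq_eq_norm_sq]
  have h2 : p * (starRingEnd ℂ) p = (starRingEnd ℂ) p * ((starRingEnd ℂ) lam * (starRingEnd ℂ) p) := by
    push_cast at h1
    linear_combination -hnp - h1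
  by_cases hp0 : p = 0
  · simp [hp0]
  · have h3 := congrArg (starRingEnd ℂ) h2
    simp only [map_mul, Complex.conj_conj] at h3
    have h4 : p * ((starRingEnd ℂ) p) = p * (lam * p) := by linear_combination h3
    exact (mul_left_cancel₀ hp0 h4).symm
end

section
/- Suppose φ(z) = (az+b)/(cz+d) with ad - bc ≠ 0 is a linear fractional self-map of the unit disk fixing a boundary point η (|η| = 1, φ(η) = η), and suppose |b| = |c|. Then φ* ∘ φ = φ ∘ φ*, where φ*(z) = (conj(a)z - conj(c))/(-conj(b)z + conj(d)); concretely, the Möbius transformations ((|a|² - |c|²)z + b·conj(a) - d·conj(c)) / ((conj(d)c - conj(b)a)z + |d|² - |b|²) and ((|a|² - |b|²)z + b·conj(d) - a·conj(c)) / ((conj(a)c - conj(b)d)z + |d|² - |c|²) are equal as Möbius maps. -/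
theorem stmt8 (a b c d η : ℂ) (hdet : a * d - b * c ≠ 0) (hd : d ≠ 0)
    (hη : ‖η‖ = 1) (hden : c * η + d ≠ 0)
    (hfix : (a * η + b) / (c * η + d) = η)
    (hbc : ‖b‖ = ‖c‖) :
    ∀ z : ℂ,
      ((starRingEnd ℂ) d * c - (starRingEnd ℂ) b * a) * z + (d * (starRingEnd ℂ) d - b * (starRingEnd ℂ) b) ≠ 0 →
      ((starRingEnd ℂ) a * c - (starRingEnd ℂ) b * d) * z + (d * (starRingEnd ℂ) d - c * (starRingEnd ℂ) c) ≠ 0 →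
      ((a * (starRingEnd ℂ) a - c * (starRingEnd ℂ) c) * z + (b * (starRingEnd ℂ) a - d * (starRingEnd ℂ) c)) /
        (((starRingEnd ℂ) d * c - (starRingEnd ℂ) b * a) * z + (d * (starRingEnd ℂ) d - b * (starRingEnd ℂ) b)) =
      ((a * (starRingEnd ℂ) a - b * (starRingEnd ℂ) b) * z + (b * (starRingEnd ℂ) d - a * (starRingEnd ℂ) c)) /
        (((starRingEnd ℂ) a * c - (starRingEnd ℂ) b * d) * z + (d * (starRingEnd ℂ) d - c * (starRingEnd ℂ) c)) := by
  intro z h1 h2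
  set a' := (starRingEnd ℂ) a with ha'
  set b' := (starRingEnd ℂ) b with hb'
  set c' := (starRingEnd ℂ) c with hc'
  set d' := (starRingEnd ℂ) d with hd'
  set η' := (starRingEnd ℂ) η with hη'
  have hu : η * η' = 1 := by
    rw [hη', Complex.mul_conj]
    norm_cast
    rw [Complex.normSq_eq_norm_sq, hη]; norm_num
  have hs : b * b' = c * c' := by
    rw [hb', hc', Complex.mul_conj, Complex.mul_conj]
    norm_cast
    rw [Complex.normSq_eq_norm_sq, Complex.normSq_eq_norm_sq, hbc]
  have he1 : a * η + b = c * η ^ 2 + d * η := by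
    have := (div_eq_iff hden).mp hfix
    linear_combination this
  have he2 : a' * η' + b' = c' * η' ^ 2 + d' * η' := by
    have := congrArg (starRingEnd ℂ) he1
    simp only [map_add, map_mul, map_pow] at this
    rw [ha', hb', hc', hd', hη']
    linear_combination this
  have hC : d' * c - b' * a = a' * c - b' * d := by
    linear_combination η' * hs - c * η * he2 - b' * η' * he1 +
      (c * (a' - d' - c' * η') + b' * (a - d - c * η)) * hu
  have hB : b * a' - d * c' = b * d' - a * c' := by
    linear_combination -η * hs + b * η * he2 + c' * η' * he1 -
      (b * (a' - d' - c' * η') + c' * (a - d - c * η)) * hu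
  have hA : a * a' - c * c' = a * a' - b * b' := by linear_combination hs
  rw [hC, hB, hA, hs]
end

section
/- Fix r ∈ (0,1). Then for any b₁ ∈ ℂ with |b₁| = 1, the equation b₁ = (r - e^{-iθ})/(r - e^{iθ}) has exactly two solutions θ ∈ [0, 2π); equivalently, writing p = r·e^{iθ} ≠ 0, the equation b₁·p·(conj(p) - 1) + conj(p)·(1 - p) = 0 with |p| = r has exactly two solutions p. -/
open Complex Real

private lemma exp_inj_Ico' {x y : ℝ} (hx : x ∈ Set.Ico 0 (2*π)) (hy : y ∈ Set.Ico 0 (2*π))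
    (h : Complex.exp (x*Complex.I) = Complex.exp (y*Complex.I)) : x = y := by
  rw [Complex.exp_eq_exp_iff_exists_int] at h
  obtain ⟨n, hn⟩ := h
  have him := congrArg Complex.im hn
  simp [Complex.add_im, Complex.mul_im] at him
  obtain ⟨hx0, hx2⟩ := hx
  obtain ⟨hy0, hy2⟩ := hy
  have hpi := Real.pi_pos
  have h1 : (-1 : ℝ) < n := by nlinarith
  have h2 : (n : ℝ) < 1 := by nlinarith
  have hn1 : (-1 : ℤ) < n := by exact_mod_cast h1
  have hn2 : n < 1 := by exact_mod_cast h2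
  have : n = 0 := by omega
  rw [this] at him
  simpa using him

private lemma exists_theta' (z : ℂ) (hz : ‖z‖ = 1) :
    ∃ θ : ℝ, θ ∈ Set.Ico 0 (2*π) ∧ Complex.exp (θ * Complex.I) = z := by
  have habs : ‖z‖ = 1 := hz
  have h1 : Complex.exp (z.arg * Complex.I) = z := by
    have h := Complex.norm_mul_exp_arg_mul_I z
    rw [habs] at h
    simpa using h
  have hpi := Real.pi_pos
  rcases le_or_gt 0 z.arg with h | h
  · exact ⟨z.arg, ⟨h, lt_of_le_of_lt (Complex.arg_le_pi z) (by linarith)⟩, h1⟩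
  · refine ⟨z.arg + 2*π, ⟨by linarith [Complex.neg_pi_lt_arg z], by linarith⟩, ?_⟩
    have heq : ((z.arg + 2*π : ℝ) : ℂ) * Complex.I = z.arg * Complex.I + 2*π*Complex.I := by
      push_cast; ring
    rw [heq, Complex.exp_add, Complex.exp_two_pi_mul_I, mul_one, h1]

theorem stmt18 (r : ℝ) (hr : 0 < r) (hr1 : r < 1) (b₁ : ℂ) (hb : ‖b₁‖ = 1) :
    {θ : ℝ | θ ∈ Set.Ico 0 (2 * π) ∧
      b₁ * ((r : ℂ) - Complex.exp (θ * Complex.I)) =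
        (r : ℂ) - Complex.exp (-(θ : ℂ) * Complex.I)}.ncard = 2 := by
  have hb0 : b₁ ≠ 0 := by intro h; rw [h] at hb; simp at hb
  obtain ⟨d, hd⟩ : ∃ d : ℂ, d ^ 2 = (r:ℂ)^2 * (b₁ - 1)^2 + 4 * b₁ :=
    IsAlgClosed.exists_pow_nat_eq _ zero_lt_two
  set z₁ : ℂ := ((r:ℂ) * (b₁ - 1) + d) / (2 * b₁) with hz₁def
  set z₂ : ℂ := ((r:ℂ) * (b₁ - 1) - d) / (2 * b₁) with hz₂def
  -- factorization
  have hfac : ∀ z : ℂ, b₁ * z^2 - (r:ℂ)*(b₁-1)*z - 1 = b₁ * (z - z₁) * (z - z₂) := by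
    intro z
    rw [hz₁def, hz₂def]
    field_simp
    ring_nf
    linear_combination hd
  -- discriminant nonzero
  have hb1le : ‖b₁ - 1‖ ≤ 2 := by
    calc ‖b₁ - 1‖ ≤ ‖b₁‖ + ‖(1:ℂ)‖ := norm_sub_le _ _
      _ = 2 := by rw [hb]; norm_num
  have hd0 : d ≠ 0 := by
    intro h
    rw [h] at hd
    have h4 : (r:ℂ)^2 * (b₁-1)^2 = -(4*b₁) := by linear_combination -hd
    have hnn : ‖(r:ℂ)^2 * (b₁-1)^2‖ = ‖-(4*b₁)‖ := by rw [h4]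
    have h1 : ‖(r:ℂ)‖ = r := by simp [abs_of_pos hr]
    rw [norm_mul, norm_pow, norm_pow, norm_neg, norm_mul, hb, h1] at hnn
    simp at hnn
    have h5 : ‖b₁-1‖^2 ≤ 4 := by nlinarith [norm_nonneg (b₁-1)]
    have h6 : r^2*‖b₁-1‖^2 ≤ r^2*4 := mul_le_mul_of_nonneg_left h5 (sq_nonneg r)
    nlinarith
  have hsub : z₁ - z₂ = d / b₁ := by
    rw [hz₁def, hz₂def]; field_simp; ring
  have hne : z₁ ≠ z₂ := by
    intro h
    have : d / b₁ = 0 := by rw [← hsub, h, sub_self]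
    exact hd0 ((div_eq_zero_iff.mp this).resolve_right hb0)
  have hsum : z₁ + z₂ = (r:ℂ)*(b₁-1)/b₁ := by
    rw [hz₁def, hz₂def]; field_simp; ring
  have hsumlt : ‖z₁ + z₂‖ < 2 := by
    rw [hsum, norm_div, norm_mul, hb, div_one]
    have h1 : ‖(r:ℂ)‖ = r := by simp [abs_of_pos hr]
    rw [h1]
    nlinarith [norm_nonneg (b₁ - 1)]
  -- roots characterization
  have hroot : ∀ z : ℂ, b₁ * z^2 - (r:ℂ)*(b₁-1)*z - 1 = 0 ↔ (z = z₁ ∨ z = z₂) := by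
    intro z
    rw [hfac z]
    constructor
    · intro h
      rcases mul_eq_zero.1 h with h | h
      · rcases mul_eq_zero.1 h with h | h
        · exact absurd h hb0
        · exact Or.inl (by linear_combination h)
      · exact Or.inr (by linear_combination h)
    · rintro (rfl | rfl) <;> ring
  -- every root has norm 1
  have hnorm1 : ∀ z : ℂ, b₁ * z^2 - (r:ℂ)*(b₁-1)*z - 1 = 0 → ‖z‖ = 1 := by
    intro z hz
    have hz0 : z ≠ 0 := by
      intro h; rw [h] at hz; simp at hz
    have hcz : (starRingEnd ℂ) z ≠ 0 := by simpa using hz0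
    have hns : Complex.normSq b₁ = 1 := by
      rw [Complex.normSq_eq_norm_sq, hb]; norm_num
    have hmul : b₁ * (starRingEnd ℂ) b₁ = 1 := by
      rw [Complex.mul_conj, hns]; norm_num
    have hbc : (starRingEnd ℂ) b₁ = b₁⁻¹ := by
      field_simp
      linear_combination hmul
    -- conj of the equation
    have hconj : (starRingEnd ℂ) b₁ * ((starRingEnd ℂ) z)^2
        - (r:ℂ) * ((starRingEnd ℂ) b₁ - 1) * ((starRingEnd ℂ) z) - 1 = 0 := by
      have h := congrArg (starRingEnd ℂ) hz
      simpa [map_sub, map_mul, map_pow, Complex.conj_ofReal] using h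
    rw [hbc] at hconj
    -- w := (conj z)⁻¹ is a root
    have hw : b₁ * (((starRingEnd ℂ) z)⁻¹)^2 - (r:ℂ)*(b₁-1)*((starRingEnd ℂ) z)⁻¹ - 1 = 0 := by
      have hkey : (b₁ * (((starRingEnd ℂ) z)⁻¹)^2 - (r:ℂ)*(b₁-1)*((starRingEnd ℂ) z)⁻¹ - 1) * ((starRingEnd ℂ) z)^2
          = -b₁ * (b₁⁻¹ * ((starRingEnd ℂ) z)^2 - (r:ℂ)*(b₁⁻¹-1)*((starRingEnd ℂ) z) - 1) := by
        field_simp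
        ring
      rw [hconj, mul_zero] at hkey
      rcases mul_eq_zero.mp hkey with h' | h'
      · exact h'
      · exact absurd h' (pow_ne_zero 2 hcz)
    by_cases hzw : ((starRingEnd ℂ) z)⁻¹ = z
    · -- z * conj z = 1
      have : z * (starRingEnd ℂ) z = 1 := by
        field_simp at hzw
        linear_combination -hzw
      have : Complex.normSq z = 1 := by
        have h2 := Complex.mul_conj z
        rw [this] at h2
        exact_mod_cast h2.symm
      have := Complex.normSq_eq_norm_sq z ▸ this
      nlinarith [norm_nonneg z]
    · -- two distinct roots: sum has norm < 2, but ‖z + (conj z)⁻¹‖ ≥ 2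
      exfalso
      have hzr := (hroot z).1 hz
      have hwr := (hroot _).1 hw
      have hsum2 : z + ((starRingEnd ℂ) z)⁻¹ = z₁ + z₂ := by
        rcases hzr with rfl | rfl <;> rcases hwr with h | h
        · exact absurd h hzw
        · rw [h]
        · rw [h]; ring
        · exact absurd h hzw
      have hlt : ‖z + ((starRingEnd ℂ) z)⁻¹‖ < 2 := hsum2 ▸ hsumlt
      -- compute: (conj z)⁻¹ = z / normSq z
      have hns : (0:ℝ) < Complex.normSq z := Complex.normSq_pos.2 hz0
      have hinv : ((starRingEnd ℂ) z)⁻¹ = z / (Complex.normSq z : ℂ) := by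
        rw [eq_div_iff (by exact_mod_cast hns.ne')]
        field_simp
        linear_combination - Complex.mul_conj z
      rw [hinv] at hlt
      have habs : ‖z + z / (Complex.normSq z : ℂ)‖ = ‖z‖ + 1/‖z‖ := by
        have h1 : z + z / (Complex.normSq z : ℂ) = z * (1 + (Complex.normSq z : ℂ)⁻¹) := by
          ring
        rw [h1, norm_mul]
        have h2 : ‖(1 + (Complex.normSq z : ℂ)⁻¹)‖ = 1 + (Complex.normSq z)⁻¹ := by
          rw [show (1 + (Complex.normSq z : ℂ)⁻¹) = ((1 + (Complex.normSq z)⁻¹ : ℝ) : ℂ) by push_cast; ring]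
          rw [Complex.norm_real, Real.norm_eq_abs, abs_of_pos (by positivity)]
        rw [h2, ← Complex.sq_norm]
        have h3 : ‖z‖ ≠ 0 := by
          simpa using hz0
        field_simp
      rw [habs] at hlt
      have hznn : (0:ℝ) < ‖z‖ := by simpa using hz0
      have hkey2 : ‖z‖ * (‖z‖ + 1/‖z‖) = ‖z‖^2 + 1 := by
        rw [mul_add, mul_one_div, div_self hznn.ne', sq]
      nlinarith [sq_nonneg (‖z‖ - 1), hznn, hkey2, hlt]
  -- norms of roots
  have hn1 : ‖z₁‖ = 1 := hnorm1 z₁ ((hroot z₁).2 (Or.inl rfl))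
  have hn2 : ‖z₂‖ = 1 := hnorm1 z₂ ((hroot z₂).2 (Or.inr rfl))
  obtain ⟨θ₁, hθ₁m, hθ₁e⟩ := exists_theta' z₁ hn1
  obtain ⟨θ₂, hθ₂m, hθ₂e⟩ := exists_theta' z₂ hn2
  -- equation equivalence
  have hequiv : ∀ θ : ℝ, (b₁ * ((r : ℂ) - Complex.exp (θ * Complex.I)) =
      (r : ℂ) - Complex.exp (-(θ : ℂ) * Complex.I)) ↔
      b₁ * (Complex.exp (θ*Complex.I))^2 - (r:ℂ)*(b₁-1)*(Complex.exp (θ*Complex.I)) - 1 = 0 := by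
    intro θ
    have he0 : Complex.exp ((θ:ℂ)*Complex.I) ≠ 0 := Complex.exp_ne_zero _
    have hneg : Complex.exp (-(θ:ℂ) * Complex.I) = (Complex.exp ((θ:ℂ)*Complex.I))⁻¹ := by
      rw [← Complex.exp_neg]; ring_nf
    rw [hneg]
    constructor
    · intro h
      have h2 := congrArg (· * Complex.exp ((θ:ℂ)*Complex.I)) h
      rw [sub_mul, inv_mul_cancel₀ he0] at h2
      linear_combination -h2
    · intro h
      have h2 : b₁ * ((r:ℂ) - Complex.exp ((θ:ℂ)*Complex.I)) * Complex.exp ((θ:ℂ)*Complex.I)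
          = ((r:ℂ) - (Complex.exp ((θ:ℂ)*Complex.I))⁻¹) * Complex.exp ((θ:ℂ)*Complex.I) := by
        rw [sub_mul, inv_mul_cancel₀ he0]
        linear_combination -h
      exact mul_right_cancel₀ he0 h2
  -- set equality
  have hset : {θ : ℝ | θ ∈ Set.Ico 0 (2 * π) ∧
      b₁ * ((r : ℂ) - Complex.exp (θ * Complex.I)) =
        (r : ℂ) - Complex.exp (-(θ : ℂ) * Complex.I)} = {θ₁, θ₂} := by
    ext θ
    simp only [Set.mem_setOf_eq, Set.mem_insert_iff, Set.mem_singleton_iff]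
    constructor
    · rintro ⟨hm, he⟩
      rw [hequiv θ] at he
      rcases (hroot _).1 he with h | h
      · exact Or.inl (exp_inj_Ico' hm hθ₁m (by rw [h, hθ₁e]))
      · exact Or.inr (exp_inj_Ico' hm hθ₂m (by rw [h, hθ₂e]))
    · rintro (h | h)
      · rw [h]; exact ⟨hθ₁m, (hequiv θ₁).2 (by rw [hθ₁e]; exact (hroot z₁).2 (Or.inl rfl))⟩
      · rw [h]; exact ⟨hθ₂m, (hequiv θ₂).2 (by rw [hθ₂e]; exact (hroot z₂).2 (Or.inr rfl))⟩
  rw [hset]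
  apply Set.ncard_pair
  intro h
  apply hne
  rw [← hθ₁e, ← hθ₂e, h]
end
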